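/- Removing α-free clauses preserves solutionhood: in the single-cut setting, let A be a solution in conjunctive normal form, i.e. A = ⋀_{i=1}^m C_i where each C_i is a clause (a disjunction of literals over atomic formulas), and let A′ be the conjunction of those clauses C_i in which the constant α occurs. Then A′ is a solution. -/

import Mathlib

open FirstOrder Language

namespace SingleCut

variable (L : FirstOrder.Language)

/-- The single-cut setting: a quantifier-free formula `F` with sole free variable `x`,
terms `u i` and `s j` possibly containing the fresh constant `α` (modelled as the
single free symbol of type `Unit`, universally interpreted). -/
structure Setting (m kk : ℕ) where
  F : L.Formula (Fin 1)
  hF : F.IsQF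
  u : Fin m → L.Term Unit
  s : Fin kk → L.Term Unit

variable {L} {m kk : ℕ}

/-- Realization of `Γ = F[x:=u₁], …, F[x:=u_m]`. -/
def GammaR (S : Setting L m kk) (M : Type) [L.Structure M] (v : Unit → M) : Prop :=
  ∀ i : Fin m, Formula.Realize (M := M) (S.F.subst (fun _ => S.u i)) v

/-- `A` is a solution: the sequent `Γ, A ⊃ ⋀_j A[α:=s_j] ⊢` is a tautology. -/
def IsSolution (S : Setting L m kk) (A : L.Formula Unit) : Prop :=
  ∀ (M : Type) [L.Structure M] [Nonempty M] (v : Unit → M),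
    ¬ (GammaR S M v ∧
        (Formula.Realize (M := M) A v →
          ∀ j : Fin kk, Formula.Realize (M := M) (A.subst (fun _ => S.s j)) v))

/-- `A ⊨ B` : the implication `A → B` is valid. -/
def Entails (A B : L.Formula Unit) : Prop :=
  ∀ (M : Type) [L.Structure M] [Nonempty M] (v : Unit → M),
    Formula.Realize (M := M) A v → Formula.Realize (M := M) B v

end SingleCut

namespace SingleCut

variable {L : FirstOrder.Language}

/-- A literal: an atomic formula or the negation of an atomic formula. -/
def IsLiteral (φ : L.Formula Unit) : Prop :=
  φ.IsAtomic ∨ ∃ ψ : L.Formula Unit, ψ.IsAtomic ∧ φ = ψ.not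

/-- The disjunction of a list of formulas (a clause as a formula). -/
def clForm (c : List (L.Formula Unit)) : L.Formula Unit :=
  c.foldr (fun φ ψ => φ ⊔ ψ) ⊥

/-- The conjunction of a list of formulas (a CNF as a formula). -/
def cnfForm (cs : List (List (L.Formula Unit))) : L.Formula Unit :=
  (cs.map clForm).foldr (fun φ ψ => φ ⊓ ψ) ⊤

end SingleCut


namespace SingleCut

variable {L : FirstOrder.Language}

lemma realize_cnfForm {M : Type} [L.Structure M] (v : Unit → M)
    (cs : List (List (L.Formula Unit))) :
    Formula.Realize (M := M) (cnfForm cs) v ↔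
      ∀ c ∈ cs, Formula.Realize (M := M) (clForm c) v := by
  induction cs with
  | nil => simp [cnfForm, Formula.realize_top]
  | cons c cs ih =>
    simp only [cnfForm, List.map_cons, List.foldr_cons, Formula.realize_inf,
      List.mem_cons] at ih ⊢
    rw [ih]
    constructor
    · rintro ⟨h1, h2⟩ d (rfl | hd)
      · exact h1
      · exact h2 d hd
    · intro h
      exact ⟨h c (Or.inl rfl), fun d hd => h d (Or.inr hd)⟩

lemma realize_indep {M : Type} [L.Structure M] {φ : L.Formula Unit}
    (h : () ∉ φ.freeVarFinset) (v v' : Unit → M) :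
    Formula.Realize (M := M) φ v ↔ Formula.Realize (M := M) φ v' := by
  have hs : ↑φ.freeVarFinset ⊆ (∅ : Set Unit) := by
    intro x hx
    cases x
    exact absurd hx h
  unfold Formula.Realize
  rw [← BoundedFormula.realize_restrictFreeVar' hs (v := v),
      ← BoundedFormula.realize_restrictFreeVar' hs (v := v')]
  have hvv : (v ∘ (↑) : (∅ : Set Unit) → M) = v' ∘ (↑) := by
    funext x
    exact absurd x.2 (Set.notMem_empty x.1)
  rw [hvv]

end SingleCut

open SingleCut

/-- **removing α-free clauses preserves solutionhood.**
In the single-cut setting, let `A = ⋀_i C_i` be a solution in conjunctive normal form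
(each `C_i` a clause, i.e. a disjunction of literals), and let `A′` be the conjunction
of those clauses `C_i` in which the constant `α` occurs.  Then `A′` is a solution. -/
theorem remove_alpha_free_clauses {m kk : ℕ}
    (L : FirstOrder.Language) (S : Setting L m kk)
    (clauses : List (List (L.Formula Unit)))
    (hlit : ∀ c ∈ clauses, ∀ φ ∈ c, IsLiteral φ)
    (hsol : IsSolution S (cnfForm clauses)) :
    IsSolution S
      (cnfForm (clauses.filter
        (fun c => decide (() ∈ (clForm c).freeVarFinset)))) := by
  intro M _ _ v
  rintro ⟨hG, himp⟩
  apply hsol M v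
  refine ⟨hG, fun hA j => ?_⟩
  have hA' : Formula.Realize (M := M)
      (cnfForm (clauses.filter (fun c => decide (() ∈ (clForm c).freeVarFinset)))) v := by
    rw [realize_cnfForm] at hA ⊢
    intro c hc
    exact hA c (List.mem_of_mem_filter hc)
  have hsub := himp hA' j
  rw [Formula.Realize, BoundedFormula.realize_subst] at hsub ⊢
  rw [show (default : Fin 0 → M) = default from rfl]
  set w : Unit → M := fun a => Term.realize (fun _ : Unit => v ()) ((fun _ : Unit => S.s j) a) with hw
  rw [realize_cnfForm] at hA
  have hsub' : ∀ c ∈ clauses.filter (fun c => decide (() ∈ (clForm c).freeVarFinset)),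
      BoundedFormula.Realize (clForm c) (fun a => Term.realize v ((fun _ : Unit => S.s j) a)) default := by
    have := (realize_cnfForm (L := L) (fun a => Term.realize v ((fun _ : Unit => S.s j) a))
      (clauses.filter (fun c => decide (() ∈ (clForm c).freeVarFinset)))).mp hsub
    exact this
  have : ∀ c ∈ clauses,
      BoundedFormula.Realize (clForm c) (fun a => Term.realize v ((fun _ : Unit => S.s j) a)) default := by
    intro c hc
    by_cases hα : () ∈ (clForm c).freeVarFinset
    · exact hsub' c (List.mem_filter.mpr ⟨hc, by simpa using hα⟩)
    · exact (realize_indep hα _ v).mpr (hA c hc)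
  exact (realize_cnfForm (L := L) _ clauses).mpr this
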